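/- arXiv:0911.1830 — 3 statements merged into one kernel-verified Lean document; each statement's English description precedes it below -/
import Mathlib

section
/- For Re(s) > 0, the Euler product ∏_p (1 + 1/((p-1)p^s)) over primes p equals the Dirichlet series ∑_{n=1}^∞ μ²(n)/(φ(n) n^s). -/
set_option maxHeartbeats 1000000


open Complex ArithmeticFunction

private noncomputable def EPF (s : ℂ) : ℕ → ℂ :=
  fun n ↦ (moebius n : ℂ) ^ 2 / ((Nat.totient n : ℂ) * (n : ℂ) ^ s)

private lemma EPF_zero (s : ℂ) : EPF s 0 = 0 := by simp [EPF]

private lemma EPF_one (s : ℂ) : EPF s 1 = 1 := by simp [EPF]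

private lemma EPF_mul (s : ℂ) {m n : ℕ} (h : Nat.Coprime m n) :
    EPF s (m * n) = EPF s m * EPF s n := by
  unfold EPF
  rw [isMultiplicative_moebius.map_mul_of_coprime h, Nat.totient_mul h]
  rw [show ((m * n : ℕ) : ℂ) = ((m : ℝ) : ℂ) * ((n : ℝ) : ℂ) by push_cast; ring,
    Complex.mul_cpow_ofReal_nonneg (by positivity) (by positivity)]
  push_cast
  rw [mul_pow, show ((Nat.totient m : ℂ) * Nat.totient n) * ((m : ℂ) ^ s * (n : ℂ) ^ s)
      = ((Nat.totient m : ℂ) * (m : ℂ) ^ s) * ((Nat.totient n : ℂ) * (n : ℂ) ^ s) by ring]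
  exact mul_div_mul_comm _ _ _ _

private lemma EPF_prime (s : ℂ) {p : ℕ} (hp : p.Prime) :
    EPF s p = 1 / (((p : ℂ) - 1) * (p : ℂ) ^ s) := by
  unfold EPF
  rw [moebius_apply_prime hp, Nat.totient_prime hp]
  push_cast [Nat.cast_sub hp.one_le]
  norm_num

private lemma EPF_prime_pow (s : ℂ) {p k : ℕ} (hp : p.Prime) (hk : 2 ≤ k) :
    EPF s (p ^ k) = 0 := by
  unfold EPF
  rw [moebius_apply_prime_pow hp (by omega), if_neg (by omega)]
  simp

private lemma tsum_EPF_pow (s : ℂ) {p : ℕ} (hp : p.Prime) :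
    ∑' e : ℕ, EPF s (p ^ e) = 1 + EPF s p := by
  rw [tsum_eq_sum (s := {0, 1}) (fun e he ↦ by
    simp only [Finset.mem_insert, Finset.mem_singleton] at he
    exact EPF_prime_pow s hp (by omega))]
  simp [EPF_one]

private lemma tsum_norm_EPF_pow (s : ℂ) {p : ℕ} (hp : p.Prime) :
    ∑' e : ℕ, ‖EPF s (p ^ e)‖ = 1 + ‖EPF s p‖ := by
  rw [tsum_eq_sum (s := {0, 1}) (fun e he ↦ by
    simp only [Finset.mem_insert, Finset.mem_singleton] at he
    rw [EPF_prime_pow s hp (by omega), norm_zero])]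
  simp [EPF_one]

private lemma norm_EPF_prime_le (s : ℂ) (hs : 0 < s.re) {p : ℕ} (hp : p.Prime) :
    ‖EPF s p‖ ≤ 2 * (p : ℝ) ^ (-(1 + s.re)) := by
  have hp2 : (2 : ℝ) ≤ (p : ℝ) := by exact_mod_cast hp.two_le
  have hp0 : (0 : ℝ) < (p : ℝ) := by linarith
  rw [EPF_prime s hp]
  rw [norm_div, norm_one, norm_mul, norm_natCast_cpow_of_pos hp.pos,
    show (p : ℂ) - 1 = (((p : ℝ) - 1 : ℝ) : ℂ) by push_cast; ring, Complex.norm_real,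
    Real.norm_of_nonneg (by linarith)]
  have hps : (0 : ℝ) < (p : ℝ) ^ s.re := Real.rpow_pos_of_pos hp0 _
  rw [Real.rpow_neg hp0.le, ← div_eq_mul_inv, Real.rpow_add hp0, Real.rpow_one,
    div_le_div_iff₀ (by nlinarith) (by positivity)]
  nlinarith [hps]

private lemma summable_norm_EPF (s : ℂ) (hs : 0 < s.re) :
    Summable (fun n ↦ ‖EPF s n‖) := by
  set B : ℕ → ℝ := fun n ↦ 2 * (n : ℝ) ^ (-(1 + s.re)) with hB
  have hBsum : Summable B :=
    (Real.summable_nat_rpow.mpr (by linarith)).mul_left 2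
  have hBnn : ∀ n, 0 ≤ B n := fun n ↦ by positivity
  have h1 : (fun n : ℕ ↦ ‖EPF s n‖) 1 = 1 := by simp [EPF_one]
  have hmul : ∀ {m n : ℕ}, Nat.Coprime m n →
      ‖EPF s (m * n)‖ = ‖EPF s m‖ * ‖EPF s n‖ := fun h ↦ by rw [EPF_mul s h, norm_mul]
  have hploc : ∀ {p : ℕ}, p.Prime → Summable (fun e : ℕ ↦ ‖‖EPF s (p ^ e)‖‖) := by
    intro p hp
    apply summable_of_ne_finset_zero (s := {0, 1})
    intro e he
    simp only [Finset.mem_insert, Finset.mem_singleton] at he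
    rw [EPF_prime_pow s hp (by omega)]
    simp
  apply summable_of_sum_range_le (fun n ↦ norm_nonneg _)
  intro N
  obtain ⟨hsum, hprod⟩ := EulerProduct.summable_and_hasSum_smoothNumbers_prod_primesBelow_tsum
    (f := fun n : ℕ ↦ ‖EPF s n‖) h1 hmul hploc N
  calc ∑ n ∈ Finset.range N, ‖EPF s n‖
      = ∑ n ∈ Finset.range N, Set.indicator N.smoothNumbers (fun n ↦ ‖EPF s n‖) n := by
        apply Finset.sum_congr rfl
        intro n hn
        rcases Nat.eq_zero_or_pos n with rfl | hn0
        · rw [Set.indicator_of_notMem (fun h ↦ (Nat.mem_smoothNumbers.mp h).1 rfl)]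
          simp [EPF_zero]
        · rw [Set.indicator_of_mem]
          exact Nat.mem_smoothNumbers_of_lt hn0 (Finset.mem_range.mp hn)
    _ ≤ ∑' n : ℕ, Set.indicator N.smoothNumbers (fun n ↦ ‖EPF s n‖) n := by
        apply Summable.sum_le_tsum _ (fun n _ ↦ Set.indicator_nonneg (fun _ _ ↦ norm_nonneg _) _)
        exact (summable_subtype_iff_indicator).mp (hsum.congr fun m ↦ norm_norm _)
    _ = ∑' m : N.smoothNumbers, ‖EPF s (m : ℕ)‖ := (tsum_subtype _ _).symm
    _ = ∏ p ∈ N.primesBelow, ∑' e : ℕ, ‖EPF s (p ^ e)‖ := hprod.tsum_eq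
    _ ≤ ∏ p ∈ N.primesBelow, Real.exp (B p) := by
        apply Finset.prod_le_prod
        · intro p hp
          exact tsum_nonneg (fun _ ↦ norm_nonneg _)
        · intro p hp
          have hpp := Nat.prime_of_mem_primesBelow hp
          rw [tsum_norm_EPF_pow s hpp]
          calc 1 + ‖EPF s p‖ ≤ 1 + B p := by
                have := norm_EPF_prime_le s hs hpp
                simp only [hB]
                linarith
            _ ≤ Real.exp (B p) := by
                have := Real.add_one_le_exp (B p)
                linarith
    _ = Real.exp (∑ p ∈ N.primesBelow, B p) := (Real.exp_sum _ _).symm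
    _ ≤ Real.exp (∑' n : ℕ, B n) := by
        apply Real.exp_le_exp.mpr
        exact Summable.sum_le_tsum _ (fun n _ ↦ hBnn n) hBsum

/-- For `Re s > 0`, the Euler product `∏_p (1 + 1/((p-1) p^s))` equals the
Dirichlet series `∑_{n ≥ 1} μ(n)² / (φ(n) n^s)`. -/
theorem euler_product_eq_dirichlet_series (s : ℂ) (hs : 0 < s.re) :
    (∏' p : Nat.Primes, (1 + 1 / (((p : ℂ) - 1) * (p : ℂ) ^ s))) =
      ∑' n : ℕ+, ((moebius n : ℂ) ^ 2 / ((Nat.totient n : ℂ) * (n : ℂ) ^ s)) := by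
  have hsum := summable_norm_EPF s hs
  have key := EulerProduct.eulerProduct_tprod (f := EPF s) (EPF_one s)
    (fun {m n} h ↦ EPF_mul s h) hsum (EPF_zero s)
  have hL : (∏' p : Nat.Primes, (1 + 1 / (((p : ℂ) - 1) * (p : ℂ) ^ s)))
      = ∏' p : Nat.Primes, ∑' e : ℕ, EPF s ((p : ℕ) ^ e) := by
    apply tprod_congr
    intro p
    rw [tsum_EPF_pow s p.2, EPF_prime s p.2]
  have hR : (∑' n : ℕ+, ((moebius n : ℂ) ^ 2 / ((Nat.totient n : ℂ) * (n : ℂ) ^ s)))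
      = ∑' n : ℕ, EPF s n := by
    have hinj : Function.Injective (fun n : ℕ+ ↦ (n : ℕ)) := fun a b h ↦ PNat.coe_injective h
    rw [show (fun n : ℕ+ ↦ ((moebius n : ℂ) ^ 2 / ((Nat.totient n : ℂ) * (n : ℂ) ^ s)))
        = fun n : ℕ+ ↦ EPF s (n : ℕ) from rfl]
    apply hinj.tsum_eq
    intro n hn
    rcases Nat.eq_zero_or_pos n with rfl | h
    · exact absurd (EPF_zero s) hn
    · exact ⟨⟨n, h⟩, rfl⟩
  rw [hL, hR, key]
end

section
/- The derivative at X = 0 of the complex function F(X) = ∏_p (1 - (p^{4πiX} - 1)/(p(p^{1+4πiX}+1))) (product over all primes p) equals -4πi ∑_p (log p)/(p(p+1)). -/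
open Complex Real

namespace DEPF

noncomputable def a (p : Nat.Primes) : ℂ := (Real.log p : ℂ) * (4 * (π : ℂ) * I)
noncomputable def E (p : Nat.Primes) (X : ℂ) : ℂ := Complex.exp (a p * X)
noncomputable def D (p : Nat.Primes) (X : ℂ) : ℂ := (p : ℂ) * ((p : ℂ) * E p X + 1)
noncomputable def f (p : Nat.Primes) (X : ℂ) : ℂ := 1 - (E p X - 1) / D p X
noncomputable def f' (p : Nat.Primes) (X : ℂ) : ℂ :=
  -((E p X * a p * D p X - (E p X - 1) * ((p : ℂ) * ((p : ℂ) * (E p X * a p)))) / D p X ^ 2)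
noncomputable def g (p : Nat.Primes) (X : ℂ) : ℂ := Complex.log (f p X)
noncomputable def g' (p : Nat.Primes) (X : ℂ) : ℂ := f' p X / f p X
noncomputable def r : ℝ := (32 * π)⁻¹
noncomputable def P (p : Nat.Primes) : ℝ := (p : ℝ) ^ ((8 : ℝ)⁻¹)

lemma norm_exp_sub_one_le (z : ℂ) : ‖Complex.exp z - 1‖ ≤ Real.exp ‖z‖ * ‖z‖ := by
  have h := (convex_closedBall (0:ℂ) ‖z‖).norm_image_sub_le_of_norm_hasFDerivWithin_le
    (f := Complex.exp) (f' := fun w => (1 : ℂ →L[ℂ] ℂ).smulRight (Complex.exp w))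
    (C := Real.exp ‖z‖) (x := 0) (y := z)
    (fun w _ => (Complex.hasDerivAt_exp w).hasFDerivAt.hasFDerivWithinAt)
    (fun w hw => by
      rw [ContinuousLinearMap.norm_smulRight_apply, norm_one, one_mul]
      rw [Complex.norm_exp]
      exact Real.exp_le_exp.mpr (le_trans (Complex.re_le_norm w)
        (by simpa using Metric.mem_closedBall.mp hw)))
    (Metric.mem_closedBall_self (norm_nonneg z))
    (by simp [Metric.mem_closedBall])
  simpa using h

lemma two_le (p : Nat.Primes) : (2 : ℝ) ≤ (p : ℝ) := by exact_mod_cast p.2.two_le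

lemma hp0 (p : Nat.Primes) : (0 : ℝ) < (p : ℝ) := lt_of_lt_of_le two_pos (two_le p)
lemma hp1 (p : Nat.Primes) : (1 : ℝ) ≤ (p : ℝ) := le_trans one_le_two (two_le p)
lemma hL0 (p : Nat.Primes) : 0 ≤ Real.log p := Real.log_nonneg (hp1 p)
lemma hLp (p : Nat.Primes) : Real.log p ≤ (p : ℝ) :=
  le_trans (Real.log_le_sub_one_of_pos (hp0 p)) (by linarith)
lemma hP0 (p : Nat.Primes) : (0 : ℝ) < P p := Real.rpow_pos_of_pos (hp0 p) _
lemma hP1 (p : Nat.Primes) : (1 : ℝ) ≤ P p := by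
  have := Real.rpow_le_rpow (by norm_num) (hp1 p) (by norm_num : (0:ℝ) ≤ (8:ℝ)⁻¹)
  simpa [Real.one_rpow, P] using this
lemma hL8 (p : Nat.Primes) : Real.log p ≤ 8 * P p := by
  have := Real.log_le_rpow_div (le_of_lt (hp0 p)) (by norm_num : (0:ℝ) < (8:ℝ)⁻¹)
  simpa [P, div_eq_mul_inv, mul_comm] using this

lemma rpow_pow (p : Nat.Primes) (n : ℕ) : P p ^ n = (p : ℝ) ^ ((n : ℝ) / 8) := by
  rw [P, ← Real.rpow_natCast ((p:ℝ) ^ ((8:ℝ)⁻¹)) n, ← Real.rpow_mul (hp0 p).le]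
  ring_nf

lemma hPsq (p : Nat.Primes) : P p ^ 2 ≤ (p : ℝ) := by
  rw [rpow_pow]
  calc (p:ℝ) ^ ((2:ℝ)/8) ≤ (p:ℝ) ^ (1:ℝ) :=
        Real.rpow_le_rpow_of_exponent_le (hp1 p) (by norm_num)
    _ = (p : ℝ) := Real.rpow_one _

lemma pPinv (p : Nat.Primes) : (p : ℝ) * (P p)⁻¹ = (p : ℝ) ^ ((7:ℝ)/8) := by
  rw [P, ← Real.rpow_neg (hp0 p).le]
  conv_lhs => rw [show (p:ℝ) * (p:ℝ) ^ (-(8:ℝ)⁻¹) = (p:ℝ) ^ (1:ℝ) * (p:ℝ) ^ (-(8:ℝ)⁻¹) by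
    rw [Real.rpow_one]]
  rw [← Real.rpow_add (hp0 p)]
  norm_num

lemma hp78 (p : Nat.Primes) : (3 : ℝ)/2 ≤ (p : ℝ) * (P p)⁻¹ := by
  rw [pPinv]
  have h8 : ((3:ℝ)/2) ^ (8:ℕ) ≤ ((p:ℝ) ^ ((7:ℝ)/8)) ^ (8:ℕ) := by
    have : ((p:ℝ) ^ ((7:ℝ)/8)) ^ (8:ℕ) = (p:ℝ) ^ ((7:ℝ)) := by
      rw [← Real.rpow_natCast ((p:ℝ) ^ ((7:ℝ)/8)) 8, ← Real.rpow_mul (hp0 p).le]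
      norm_num
    rw [this]
    calc ((3:ℝ)/2) ^ (8:ℕ) ≤ (2:ℝ) ^ (7:ℝ) := by norm_num
      _ ≤ (p:ℝ) ^ (7:ℝ) := Real.rpow_le_rpow (by norm_num) (two_le p) (by norm_num)
  exact le_of_pow_le_pow_left₀ (by norm_num) (Real.rpow_nonneg (hp0 p).le _) h8

lemma hr0 : 0 < r := by
  rw [r]; positivity

lemma rpow_div_sq (p : Nat.Primes) (c : ℝ) :
    (p:ℝ) ^ c / (p:ℝ) ^ 2 = (p:ℝ) ^ (c - 2) := by
  rw [show ((p:ℝ) ^ (2:ℕ)) = (p:ℝ) ^ ((2:ℕ):ℝ) from (Real.rpow_natCast _ 2).symm,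
    ← Real.rpow_sub (hp0 p)]
  norm_num

lemma norm_p (p : Nat.Primes) : ‖(p : ℂ)‖ = (p : ℝ) := by
  simp

lemma norm_a (p : Nat.Primes) : ‖a p‖ = Real.log p * (4 * π) := by
  rw [a, norm_mul, Complex.norm_real, Real.norm_eq_abs, _root_.abs_of_nonneg (hL0 p)]
  congr 1
  rw [norm_mul, norm_mul, Complex.norm_I, mul_one]
  norm_num [Complex.norm_real, _root_.abs_of_nonneg Real.pi_pos.le]

lemma haX (p : Nat.Primes) {X : ℂ} (hX : ‖X‖ < r) : ‖a p * X‖ ≤ Real.log p / 8 := by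
  rw [norm_mul, norm_a]
  have h1 : ‖X‖ ≤ r := hX.le
  have h2 : Real.log p * (4 * π) * ‖X‖ ≤ Real.log p * (4 * π) * r := by
    apply mul_le_mul_of_nonneg_left h1
    positivity
  refine h2.trans (le_of_eq ?_)
  rw [r]
  field_simp
  ring

lemma expL8 (p : Nat.Primes) : Real.exp (Real.log p / 8) = P p := by
  rw [P, Real.rpow_def_of_pos (hp0 p)]
  ring_nf

lemma normE_ub (p : Nat.Primes) {X : ℂ} (hX : ‖X‖ < r) : ‖E p X‖ ≤ P p := by
  rw [E, Complex.norm_exp, ← expL8]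
  exact Real.exp_le_exp.mpr ((Complex.re_le_norm _).trans (haX p hX))

lemma normE_lb (p : Nat.Primes) {X : ℂ} (hX : ‖X‖ < r) : (P p)⁻¹ ≤ ‖E p X‖ := by
  rw [E, Complex.norm_exp, ← expL8, ← Real.exp_neg]
  apply Real.exp_le_exp.mpr
  have h1 : -‖a p * X‖ ≤ (a p * X).re := by
    have := Complex.abs_re_le_norm (a p * X)
    cases' abs_le.mp this with h _
    linarith
  have := haX p hX
  linarith

lemma normN (p : Nat.Primes) {X : ℂ} (hX : ‖X‖ < r) :
    ‖E p X - 1‖ ≤ P p * (Real.log p / 8) := by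
  refine (norm_exp_sub_one_le _).trans ?_
  have h1 : Real.exp ‖a p * X‖ ≤ P p := by
    rw [← expL8]
    exact Real.exp_le_exp.mpr (haX p hX)
  exact mul_le_mul h1 (haX p hX) (norm_nonneg _) (hP0 p).le

lemma normPE1_lb (p : Nat.Primes) {X : ℂ} (hX : ‖X‖ < r) :
    (p : ℝ) * (P p)⁻¹ / 3 ≤ ‖(p : ℂ) * E p X + 1‖ := by
  have h1 : ‖(p:ℂ) * E p X‖ - ‖(-1 : ℂ)‖ ≤ ‖(p:ℂ) * E p X - (-1)‖ := norm_sub_norm_le _ _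
  simp only [norm_neg, norm_one, sub_neg_eq_add] at h1
  have h2 : (p : ℝ) * (P p)⁻¹ ≤ ‖(p:ℂ) * E p X‖ := by
    rw [norm_mul, norm_p]
    exact mul_le_mul_of_nonneg_left (normE_lb p hX) (hp0 p).le
  have h3 := hp78 p
  linarith

lemma normD_lb (p : Nat.Primes) {X : ℂ} (hX : ‖X‖ < r) :
    (p : ℝ) ^ 2 / (3 * P p) ≤ ‖D p X‖ := by
  rw [D, norm_mul, norm_p]
  have h1 := normPE1_lb p hX
  have h2 : (p:ℝ) * ((p : ℝ) * (P p)⁻¹ / 3) ≤ (p:ℝ) * ‖(p : ℂ) * E p X + 1‖ :=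
    mul_le_mul_of_nonneg_left h1 (hp0 p).le
  refine le_trans (le_of_eq ?_) h2
  have := (hP0 p).ne'
  field_simp

lemma normD_pos (p : Nat.Primes) {X : ℂ} (hX : ‖X‖ < r) : D p X ≠ 0 := by
  have h1 := normD_lb p hX
  have h2 : 0 < (p : ℝ) ^ 2 / (3 * P p) :=
    div_pos (pow_pos (hp0 p) 2) (mul_pos three_pos (hP0 p))
  intro h
  rw [h, norm_zero] at h1
  linarith

lemma normD_ub (p : Nat.Primes) {X : ℂ} (hX : ‖X‖ < r) :
    ‖D p X‖ ≤ 2 * (p : ℝ) ^ 2 * P p := by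
  rw [D, norm_mul, norm_p]
  have h1 : ‖(p : ℂ) * E p X + 1‖ ≤ (p:ℝ) * P p + 1 := by
    refine (norm_add_le _ _).trans ?_
    rw [norm_mul, norm_p, norm_one]
    have := mul_le_mul_of_nonneg_left (normE_ub p hX) (hp0 p).le
    linarith
  have h2 : (1:ℝ) ≤ (p:ℝ) * P p := one_le_mul_of_one_le_of_one_le (hp1 p) (hP1 p)
  have h3 : ‖(p : ℂ) * E p X + 1‖ ≤ 2 * ((p:ℝ) * P p) := by linarith
  calc (p:ℝ) * ‖(p : ℂ) * E p X + 1‖ ≤ (p:ℝ) * (2 * ((p:ℝ) * P p)) :=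
        mul_le_mul_of_nonneg_left h3 (hp0 p).le
    _ = 2 * (p : ℝ) ^ 2 * P p := by ring

lemma hf_sub_one (p : Nat.Primes) {X : ℂ} (hX : ‖X‖ < r) :
    ‖f p X - 1‖ ≤ 3/8 * (Real.log p * P p ^ 2 / (p : ℝ) ^ 2) := by
  have hD := normD_pos p hX
  have hDn : (0:ℝ) < ‖D p X‖ := norm_pos_iff.mpr hD
  have hB : (0:ℝ) ≤ 3/8 * (Real.log p * P p ^ 2 / (p : ℝ) ^ 2) := by
    have := hL0 p; have := hP0 p; have := hp0 p; positivity
  rw [f]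
  have : (1 : ℂ) - (E p X - 1) / D p X - 1 = -((E p X - 1) / D p X) := by ring
  rw [this, norm_neg, norm_div]
  rw [div_le_iff₀ hDn]
  have key : P p * (Real.log p / 8) =
      3/8 * (Real.log p * P p ^ 2 / (p : ℝ) ^ 2) * ((p : ℝ) ^ 2 / (3 * P p)) := by
    have h1 := (hP0 p).ne'
    have h2 := (hp0 p).ne'
    field_simp
  calc ‖E p X - 1‖ ≤ P p * (Real.log p / 8) := normN p hX
    _ = 3/8 * (Real.log p * P p ^ 2 / (p : ℝ) ^ 2) * ((p : ℝ) ^ 2 / (3 * P p)) := key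
    _ ≤ 3/8 * (Real.log p * P p ^ 2 / (p : ℝ) ^ 2) * ‖D p X‖ :=
        mul_le_mul_of_nonneg_left (normD_lb p hX) hB

lemma hf_sub_one_half (p : Nat.Primes) {X : ℂ} (hX : ‖X‖ < r) :
    ‖f p X - 1‖ ≤ 1/2 := by
  refine (hf_sub_one p hX).trans ?_
  have h1 : Real.log p * P p ^ 2 ≤ (p:ℝ) * (p:ℝ) :=
    mul_le_mul (hLp p) (hPsq p) (by positivity) (hp0 p).le
  have h2 : Real.log p * P p ^ 2 / (p : ℝ) ^ 2 ≤ 1 := by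
    rw [div_le_one (pow_pos (hp0 p) 2)]
    calc Real.log p * P p ^ 2 ≤ (p:ℝ) * (p:ℝ) := h1
      _ = (p:ℝ)^2 := (sq (p:ℝ)).symm
  linarith

lemma hf_slit (p : Nat.Primes) {X : ℂ} (hX : ‖X‖ < r) : f p X ∈ Complex.slitPlane := by
  have h := Complex.mem_slitPlane_of_norm_lt_one
    (z := f p X - 1) (lt_of_le_of_lt (hf_sub_one_half p hX) (by norm_num))
  have e : 1 + (f p X - 1) = f p X := by ring
  rwa [e] at h

lemma hf_ne (p : Nat.Primes) {X : ℂ} (hX : ‖X‖ < r) : f p X ≠ 0 :=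
  Complex.slitPlane_ne_zero (hf_slit p hX)

lemma hf_lb (p : Nat.Primes) {X : ℂ} (hX : ‖X‖ < r) : 1/2 ≤ ‖f p X‖ := by
  have h1 := hf_sub_one_half p hX
  have h2 := norm_sub_norm_le (1:ℂ) (1 - f p X)
  have h3 : (1:ℂ) - (1 - f p X) = f p X := by ring
  rw [h3, norm_one, norm_sub_rev] at h2
  linarith

lemma hg_bound (p : Nat.Primes) {X : ℂ} (hX : ‖X‖ < r) :
    ‖g p X‖ ≤ (9/2) * (p : ℝ) ^ (-(13:ℝ)/8) := by
  have h0 : f p X = 1 + (f p X - 1) := by ring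
  rw [g, h0]
  refine (Complex.norm_log_one_add_half_le_self (hf_sub_one_half p hX)).trans ?_
  have h1 := hf_sub_one p hX
  have h2 : (3:ℝ)/2 * ‖f p X - 1‖ ≤ 3/2 * (3/8 * (Real.log p * P p ^ 2 / (p : ℝ) ^ 2)) :=
    mul_le_mul_of_nonneg_left h1 (by norm_num)
  refine h2.trans ?_
  have h3 : Real.log p * P p ^ 2 ≤ 8 * P p * P p ^ 2 :=
    mul_le_mul_of_nonneg_right (hL8 p) (by positivity)
  have h4 : 8 * P p * P p ^ 2 = 8 * ((p:ℝ) ^ (((3:ℕ):ℝ)/8)) := by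
    rw [← rpow_pow p 3]
    ring
  have h5 : Real.log p * P p ^ 2 / (p : ℝ) ^ 2 ≤ 8 * ((p:ℝ) ^ (((3:ℕ):ℝ)/8)) / (p:ℝ)^2 :=
    (div_le_div_iff_of_pos_right (pow_pos (hp0 p) 2)).mpr (h3.trans_eq h4)
  calc 3/2 * (3/8 * (Real.log p * P p ^ 2 / (p : ℝ) ^ 2))
      ≤ 3/2 * (3/8 * (8 * ((p:ℝ) ^ (((3:ℕ):ℝ)/8)) / (p:ℝ)^2)) := by
        apply mul_le_mul_of_nonneg_left _ (by norm_num)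
        apply mul_le_mul_of_nonneg_left _ (by norm_num)
        rw [mul_div_assoc] at h5 ⊢
        exact h5
    _ = (9/2) * ((p:ℝ) ^ (((3:ℕ):ℝ)/8) / (p:ℝ)^2) := by ring
    _ = (9/2) * (p : ℝ) ^ (-(13:ℝ)/8) := by
        rw [rpow_div_sq]
        norm_num

lemma pC_ne (p : Nat.Primes) : (p : ℂ) ≠ 0 := by
  exact_mod_cast Nat.cast_ne_zero.mpr p.2.pos.ne'

lemma hf'_bound (p : Nat.Primes) {X : ℂ} (hX : ‖X‖ < r) :
    ‖f' p X‖ ≤ 864 * π * (p : ℝ) ^ (-(5:ℝ)/4) := by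
  have hπ := Real.pi_pos
  have hp := hp0 p
  have hP := hP0 p
  have hL := hL0 p
  have hP1' := hP1 p
  set L := Real.log p with hLdef
  have h1 : ‖E p X * a p * D p X‖ ≤ P p * (L * (4*π)) * (2 * (p:ℝ)^2 * P p) := by
    rw [norm_mul, norm_mul, norm_a]
    gcongr
    · exact normE_ub p hX
    · exact normD_ub p hX
  have h2 : ‖(E p X - 1) * ((p : ℂ) * ((p : ℂ) * (E p X * a p)))‖ ≤
      (P p * (L/8)) * ((p:ℝ) * ((p:ℝ) * (P p * (L * (4*π))))) := by
    rw [norm_mul, norm_mul, norm_mul, norm_mul, norm_a, norm_p]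
    gcongr
    · exact normN p hX
    · exact normE_ub p hX
  have hnum : ‖E p X * a p * D p X - (E p X - 1) * ((p : ℂ) * ((p : ℂ) * (E p X * a p)))‖ ≤
      8*π*L*((p:ℝ)^2 * P p^2) + (π/2)*L^2*((p:ℝ)^2 * P p^2) := by
    refine (norm_sub_le _ _).trans ?_
    refine le_trans (add_le_add h1 h2) (le_of_eq ?_)
    ring
  have hP34 : P p^3 ≤ P p^4 := pow_le_pow_right₀ (hP1 p) (by norm_num)
  have t1 : 8*π*L*((p:ℝ)^2 * P p^2) ≤ 64*π*((p:ℝ)^2 * P p^4) := by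
    have h : L * P p ^ 2 ≤ 8 * P p ^ 4 := by
      calc L * P p^2 ≤ (8*P p) * P p^2 := mul_le_mul_of_nonneg_right (hL8 p) (by positivity)
        _ = 8 * P p^3 := by ring
        _ ≤ 8 * P p^4 := by linarith
    calc 8*π*L*((p:ℝ)^2 * P p^2) = 8*π*(p:ℝ)^2 * (L * P p^2) := by ring
      _ ≤ 8*π*(p:ℝ)^2 * (8 * P p^4) := mul_le_mul_of_nonneg_left h (by positivity)
      _ = 64*π*((p:ℝ)^2 * P p^4) := by ring
  have t2 : (π/2)*L^2*((p:ℝ)^2 * P p^2) ≤ 32*π*((p:ℝ)^2 * P p^4) := by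
    have hsq : L^2 ≤ 64 * P p^2 := by
      have := pow_le_pow_left₀ hL (hL8 p) 2
      calc L^2 ≤ (8 * P p)^2 := this
        _ = 64 * P p^2 := by ring
    have h : L^2 * P p^2 ≤ 64 * P p^4 := by
      calc L^2 * P p^2 ≤ (64 * P p^2) * P p^2 := mul_le_mul_of_nonneg_right hsq (by positivity)
        _ = 64 * P p^4 := by ring
    calc (π/2)*L^2*((p:ℝ)^2 * P p^2) = (π/2)*(p:ℝ)^2 * (L^2 * P p^2) := by ring
      _ ≤ (π/2)*(p:ℝ)^2 * (64 * P p^4) := mul_le_mul_of_nonneg_left h (by positivity)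
      _ = 32*π*((p:ℝ)^2 * P p^4) := by ring
  have hnum2 : ‖E p X * a p * D p X - (E p X - 1) * ((p : ℂ) * ((p : ℂ) * (E p X * a p)))‖ ≤
      96*π*((p:ℝ)^2 * P p^4) := by linarith
  have hDpos : (0:ℝ) < ‖D p X‖ := norm_pos_iff.mpr (normD_pos p hX)
  have hDlb2 : (p:ℝ)^4/(9 * P p^2) ≤ ‖D p X‖^2 := by
    have h := pow_le_pow_left₀ (by positivity) (normD_lb p hX) 2
    have e : ((p:ℝ)^2/(3 * P p))^2 = (p:ℝ)^4/(9 * P p^2) := by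
      field_simp
      ring
    rw [← e]
    exact h
  rw [f', norm_neg, norm_div, norm_pow]
  rw [div_le_iff₀ (by positivity)]
  have key : 864 * π * (p : ℝ) ^ (-(5:ℝ)/4) * ((p:ℝ)^4/(9 * P p^2)) =
      96*π*((p:ℝ)^2 * P p^4) := by
    have core : (p:ℝ)^(-(5:ℝ)/4) * (p:ℝ)^(4:ℕ) = (p:ℝ)^(2:ℕ) * P p^6 := by
      rw [rpow_pow p 6, ← Real.rpow_natCast (p:ℝ) 4, ← Real.rpow_natCast (p:ℝ) 2,
        ← Real.rpow_add hp, ← Real.rpow_add hp]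
      norm_num
    have hP2 : P p ^ 2 ≠ 0 := by positivity
    rw [show 864 * π * (p:ℝ)^(-(5:ℝ)/4) * ((p:ℝ)^4/(9*P p^2)) =
        96*π*((p:ℝ)^(-(5:ℝ)/4) * (p:ℝ)^(4:ℕ)) / P p^2 by ring, core, div_eq_iff hP2]
    ring
  calc ‖E p X * a p * D p X - (E p X - 1) * ((p : ℂ) * ((p : ℂ) * (E p X * a p)))‖
      ≤ 96*π*((p:ℝ)^2 * P p^4) := hnum2
    _ = 864 * π * (p : ℝ) ^ (-(5:ℝ)/4) * ((p:ℝ)^4/(9 * P p^2)) := key.symm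
    _ ≤ 864 * π * (p : ℝ) ^ (-(5:ℝ)/4) * ‖D p X‖^2 :=
        mul_le_mul_of_nonneg_left hDlb2 (by positivity)

lemma hg'_bound (p : Nat.Primes) {X : ℂ} (hX : ‖X‖ < r) :
    ‖g' p X‖ ≤ 1728 * π * (p : ℝ) ^ (-(5:ℝ)/4) := by
  have hf := hf_lb p hX
  have hfpos : (0:ℝ) < ‖f p X‖ := by linarith
  have hB : (0:ℝ) ≤ 864 * π * (p : ℝ) ^ (-(5:ℝ)/4) := by positivity
  rw [g', norm_div, div_le_iff₀ hfpos]
  calc ‖f' p X‖ ≤ 864 * π * (p : ℝ) ^ (-(5:ℝ)/4) := hf'_bound p hX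
    _ = (1728 * π * (p : ℝ) ^ (-(5:ℝ)/4)) * (1/2) := by ring
    _ ≤ (1728 * π * (p : ℝ) ^ (-(5:ℝ)/4)) * ‖f p X‖ :=
        mul_le_mul_of_nonneg_left hf (by positivity)

lemma summable_u : Summable (fun p : Nat.Primes => 1728 * π * (p : ℝ) ^ (-(5:ℝ)/4)) := by
  have : Summable (fun p : Nat.Primes => (p : ℝ) ^ (-(5:ℝ)/4)) :=
    Nat.Primes.summable_rpow.mpr (by norm_num)
  simpa [mul_assoc] using this.mul_left (1728 * π)

lemma summable_g {X : ℂ} (hX : ‖X‖ < r) : Summable (fun p : Nat.Primes => g p X) := by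
  have hb : Summable (fun p : Nat.Primes => (9/2) * (p : ℝ) ^ (-(13:ℝ)/8)) :=
    (Nat.Primes.summable_rpow.mpr (by norm_num)).mul_left _
  exact Summable.of_norm_bounded hb (fun p => hg_bound p hX)

lemma hasDerivAt_E (p : Nat.Primes) (X : ℂ) :
    HasDerivAt (fun Y : ℂ => E p Y) (E p X * a p) X := by
  have h := ((hasDerivAt_id X).const_mul (a p)).cexp
  simpa [E, mul_comm] using h

lemma hasDerivAt_f (p : Nat.Primes) {X : ℂ} (hX : ‖X‖ < r) :
    HasDerivAt (f p) (f' p X) X := by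
  have hE := hasDerivAt_E p X
  have hN := hE.sub_const 1
  have hD : HasDerivAt (fun Y : ℂ => D p Y) ((p:ℂ) * ((p:ℂ) * (E p X * a p))) X := by
    simpa [D] using ((hE.const_mul (p:ℂ)).add_const 1).const_mul (p:ℂ)
  have hQ := hN.div hD (normD_pos p hX)
  have h := hQ.const_sub 1
  exact h

lemma hasDerivAt_g (p : Nat.Primes) {X : ℂ} (hX : ‖X‖ < r) :
    HasDerivAt (g p) (g' p X) X := by
  have h := (hasDerivAt_f p hX).clog (hf_slit p hX)
  exact h

lemma E_zero (p : Nat.Primes) : E p 0 = 1 := by simp [E]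
lemma f_zero (p : Nat.Primes) : f p 0 = 1 := by simp [f, E_zero]
lemma g_zero (p : Nat.Primes) : g p 0 = 0 := by simp [g, f_zero]
lemma D_zero (p : Nat.Primes) : D p 0 = (p:ℂ) * ((p:ℂ) + 1) := by simp [D, E_zero]

lemma pD_ne (p : Nat.Primes) : ((p:ℂ) * ((p:ℂ) + 1)) ≠ 0 := by
  apply mul_ne_zero (pC_ne p)
  intro h
  have : ((p:ℕ) + 1 : ℂ) = 0 := by push_cast; linear_combination h
  exact_mod_cast this

lemma g'_zero (p : Nat.Primes) :
    g' p 0 = -4*(π:ℂ)*I*((Real.log p : ℂ) / ((p:ℂ) * ((p:ℂ) + 1))) := by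
  rw [g', f_zero, div_one, f', E_zero, D_zero, a]
  have h := pD_ne p
  field_simp
  ring

lemma cpow_eq (p : Nat.Primes) (w : ℂ) :
    (p:ℂ) ^ w = Complex.exp ((Real.log p : ℂ) * w) := by
  rw [Complex.cpow_def_of_ne_zero (pC_ne p), Complex.natCast_log]

lemma factor_eq (p : Nat.Primes) (X : ℂ) :
    (1 - ((p : ℂ) ^ (4 * (π : ℂ) * I * X) - 1) /
      ((p : ℂ) * ((p : ℂ) ^ (1 + 4 * (π : ℂ) * I * X) + 1))) = f p X := by
  rw [Complex.cpow_add _ _ (pC_ne p), Complex.cpow_one, cpow_eq]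
  simp only [f, E, D, a]
  rw [show (Real.log p : ℂ) * (4 * (π:ℂ) * I * X) = (Real.log p : ℂ) * (4 * (π:ℂ) * I) * X by
    ring]

end DEPF

/-- The derivative at `X = 0` of `F(X) = ∏_p (1 - (p^{4πiX}-1)/(p(p^{1+4πiX}+1)))`
equals `-4πi ∑_p (log p)/(p(p+1))`. -/
theorem deriv_euler_product_factor :
    deriv (fun X : ℂ => ∏' p : Nat.Primes,
        (1 - ((p : ℂ) ^ (4 * (π : ℂ) * I * X) - 1) /
          ((p : ℂ) * ((p : ℂ) ^ (1 + 4 * (π : ℂ) * I * X) + 1)))) 0 =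
      -4 * (π : ℂ) * I *
        ∑' p : Nat.Primes, (Real.log p : ℂ) / ((p : ℂ) * ((p : ℂ) + 1)) := by
  classical
  have hr := DEPF.hr0
  have hS : HasDerivAt (fun Y : ℂ => ∑' p : Nat.Primes, DEPF.g p Y)
      (∑' p : Nat.Primes, DEPF.g' p 0) 0 := by
    refine hasDerivAt_tsum_of_isPreconnected DEPF.summable_u Metric.isOpen_ball
      (convex_ball (0:ℂ) DEPF.r).isPreconnected
      (fun p Y hY => DEPF.hasDerivAt_g p (mem_ball_zero_iff.mp hY))
      (fun p Y hY => DEPF.hg'_bound p (mem_ball_zero_iff.mp hY))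
      (Metric.mem_ball_self hr) ?_
      (Metric.mem_ball_self hr)
    simpa [DEPF.g_zero] using summable_zero
  have hz : (∑' p : Nat.Primes, DEPF.g p 0) = 0 := by simp [DEPF.g_zero]
  have hexp : HasDerivAt (fun Y : ℂ => Complex.exp (∑' p : Nat.Primes, DEPF.g p Y))
      (∑' p : Nat.Primes, DEPF.g' p 0) 0 := by
    have h := hS.cexp
    rw [hz] at h
    simpa using h
  have heq : (fun X : ℂ => ∏' p : Nat.Primes,
      (1 - ((p : ℂ) ^ (4 * (π : ℂ) * I * X) - 1) /
        ((p : ℂ) * ((p : ℂ) ^ (1 + 4 * (π : ℂ) * I * X) + 1)))) =ᶠ[nhds 0]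
      (fun Y : ℂ => Complex.exp (∑' p : Nat.Primes, DEPF.g p Y)) := by
    filter_upwards [Metric.ball_mem_nhds (0:ℂ) hr] with X hX
    have h2 := Complex.cexp_tsum_eq_tprod
      (f := fun (p : Nat.Primes) => DEPF.f p X)
      (fun p => DEPF.hf_ne p (mem_ball_zero_iff.mp hX))
      (DEPF.summable_g (mem_ball_zero_iff.mp hX))
    calc (∏' p : Nat.Primes, (1 - ((p : ℂ) ^ (4 * (π : ℂ) * I * X) - 1) /
          ((p : ℂ) * ((p : ℂ) ^ (1 + 4 * (π : ℂ) * I * X) + 1))))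
        = ∏' p : Nat.Primes, DEPF.f p X := tprod_congr (fun p => DEPF.factor_eq p X)
      _ = Complex.exp (∑' p : Nat.Primes, DEPF.g p X) := by
          simpa [DEPF.g] using h2.symm
  have hF := hexp.congr_of_eventuallyEq heq
  rw [hF.deriv]
  rw [tsum_congr DEPF.g'_zero, tsum_mul_left]
end

section
/- Let k ≥ 2 be an integer and σ, R, N > 1 with R ≥ N. Suppose h : ℝ → ℂ is bounded with support in (-σ, σ). Then ∑_{b=1}^∞ (μ²(b)/φ(b)) ∫_0^∞ |J_{k-1}(y)| · |h(2 log(b y √N / (4π)) / log R)| dy converges; more precisely, the b-th summand is O_{k,h}(R^{kσ/2}/(φ(b) b^k)), so the series is dominated by a convergent series. -/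
open Real MeasureTheory ArithmeticFunction

/-- The Bessel function of the first kind of (integer) order `n`, via Bessel's
integral representation. -/
noncomputable def besselJ (n : ℕ) (x : ℝ) : ℝ :=
  (1 / π) * ∫ θ in (0 : ℝ)..π, Real.cos (n * θ - x * Real.sin θ)

open intervalIntegral

set_option linter.unusedVariables false


lemma cos_nat_int (n : ℕ) (hn : 1 ≤ n) : ∫ θ in (0:ℝ)..π, Real.cos (n*θ) = 0 := by
  have hne : (n:ℝ) ≠ 0 := by positivity
  rw [intervalIntegral.integral_comp_mul_left Real.cos hne]
  simp [Real.sin_nat_mul_pi]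

lemma trig_vanish (j : ℕ) : ∀ n : ℕ, j < n →
    (Even j → ∫ θ in (0:ℝ)..π, Real.cos (n*θ) * Real.sin θ ^ j = 0) ∧
    (Odd j → ∫ θ in (0:ℝ)..π, Real.sin (n*θ) * Real.sin θ ^ j = 0) := by
  induction j with
  | zero =>
    intro n hn
    refine ⟨fun _ => ?_, fun hodd => absurd hodd (by simp)⟩
    simpa using cos_nat_int n hn
  | succ j ih =>
    intro n hn
    obtain ⟨m, rfl⟩ : ∃ m, n = m + 1 := ⟨n - 1, by omega⟩
    constructor
    · intro hev
      obtain ⟨r, hr⟩ := hev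
      have hodd : Odd j := ⟨r - 1, by omega⟩
      have key : ∀ θ : ℝ, Real.cos ((m+1:ℕ)*θ) * Real.sin θ ^ (j+1)
          = (1/2) * (Real.sin ((m+2:ℕ)*θ) * Real.sin θ ^ j)
            - (1/2) * (Real.sin ((m:ℕ)*θ) * Real.sin θ ^ j) := by
        intro θ
        have h1 : ((m+2:ℕ):ℝ)*θ = ((m+1:ℕ):ℝ)*θ + θ := by push_cast; ring
        have h2 : ((m:ℕ):ℝ)*θ = ((m+1:ℕ):ℝ)*θ - θ := by push_cast; ring
        rw [h1, h2, Real.sin_add, Real.sin_sub, pow_succ]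
        ring
      rw [intervalIntegral.integral_congr (fun θ _ => key θ)]
      rw [intervalIntegral.integral_sub
        ((by fun_prop : Continuous _).intervalIntegrable _ _)
        ((by fun_prop : Continuous _).intervalIntegrable _ _)]
      rw [intervalIntegral.integral_const_mul, intervalIntegral.integral_const_mul]
      have e1 := (ih (m+2) (by omega)).2 hodd
      have e2 := (ih m (by omega)).2 hodd
      rw [e1, e2]; ring
    · intro hodd
      obtain ⟨r, hr⟩ := hodd
      have hev : Even j := ⟨r, by omega⟩
      have key : ∀ θ : ℝ, Real.sin ((m+1:ℕ)*θ) * Real.sin θ ^ (j+1)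
          = (1/2) * (Real.cos ((m:ℕ)*θ) * Real.sin θ ^ j)
            - (1/2) * (Real.cos ((m+2:ℕ)*θ) * Real.sin θ ^ j) := by
        intro θ
        have h1 : ((m+2:ℕ):ℝ)*θ = ((m+1:ℕ):ℝ)*θ + θ := by push_cast; ring
        have h2 : ((m:ℕ):ℝ)*θ = ((m+1:ℕ):ℝ)*θ - θ := by push_cast; ring
        rw [h1, h2, Real.cos_add, Real.cos_sub, pow_succ]
        ring
      rw [intervalIntegral.integral_congr (fun θ _ => key θ)]
      rw [intervalIntegral.integral_sub
        ((by fun_prop : Continuous _).intervalIntegrable _ _)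
        ((by fun_prop : Continuous _).intervalIntegrable _ _)]
      rw [intervalIntegral.integral_const_mul, intervalIntegral.integral_const_mul]
      have e1 := (ih m (by omega)).1 hev
      have e2 := (ih (m+2) (by omega)).1 hev
      rw [e1, e2]; ring

lemma neg_one_pow_im (q : ℕ) : ((-1:ℂ)^q).im = 0 := by
  have : ((-1:ℂ))^q = (((-1:ℝ)^q : ℝ) : ℂ) := by push_cast; ring
  rw [this, Complex.ofReal_im]

lemma neg_one_pow_re (q : ℕ) : ((-1:ℂ)^q).re = (-1:ℝ)^q := by
  have : ((-1:ℂ))^q = (((-1:ℝ)^q : ℝ) : ℂ) := by push_cast; ring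
  rw [this, Complex.ofReal_re]

lemma I_pow_re_odd {m : ℕ} (hm : Odd m) : (Complex.I ^ m).re = 0 := by
  obtain ⟨q, rfl⟩ := hm
  have : Complex.I ^ (2*q+1) = (-1:ℂ)^q * Complex.I := by
    rw [pow_succ, pow_mul, Complex.I_sq]
  simp [this, Complex.mul_re, neg_one_pow_im]

lemma I_pow_im_even {m : ℕ} (hm : Even m) : (Complex.I ^ m).im = 0 := by
  obtain ⟨q, rfl⟩ := hm
  have : Complex.I ^ (q + q) = (-1:ℂ)^q := by
    rw [← two_mul, pow_mul, Complex.I_sq]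
  simp [this, neg_one_pow_im]

lemma factor_le_two (n : ℕ) (hn : 1 ≤ n) :
    ((n : ℕ).succ : ℝ) * (((n : ℕ).factorial : ℝ) * n)⁻¹ ≤ 2 := by
  have h1 : (1:ℝ) ≤ n.factorial := by exact_mod_cast n.factorial_pos
  have h2 : (1:ℝ) ≤ n := by exact_mod_cast hn
  have hpos : (0:ℝ) < n.factorial * n := by nlinarith
  rw [← div_eq_mul_inv, div_le_iff₀ hpos]
  push_cast
  nlinarith

lemma cos_taylor (n : ℕ) (hn : 1 ≤ n) (t : ℝ) (ht : |t| ≤ 1) :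
    |Real.cos t - ∑ m ∈ Finset.range n, (t^m / m.factorial) * (Complex.I^m).re|
      ≤ 2 * |t|^n := by
  have hb := Complex.exp_bound (x := (t:ℂ) * Complex.I) (by simpa using ht) (by omega : 0 < n)
  have hre : (Complex.exp ((t:ℂ)*Complex.I)
      - ∑ m ∈ Finset.range n, ((t:ℂ)*Complex.I)^m / m.factorial).re
      = Real.cos t - ∑ m ∈ Finset.range n, (t^m / m.factorial) * (Complex.I^m).re := by
    rw [Complex.sub_re, Complex.exp_ofReal_mul_I_re, Complex.re_sum]
    congr 1
    refine Finset.sum_congr rfl fun m _ => ?_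
    have : ((t:ℂ)*Complex.I)^m / m.factorial
        = ((t^m / m.factorial : ℝ) : ℂ) * Complex.I^m := by
      push_cast; rw [mul_pow]; ring
    rw [this, Complex.re_ofReal_mul]
  calc |Real.cos t - ∑ m ∈ Finset.range n, (t^m / m.factorial) * (Complex.I^m).re|
      = |(Complex.exp ((t:ℂ)*Complex.I)
          - ∑ m ∈ Finset.range n, ((t:ℂ)*Complex.I)^m / m.factorial).re| := by rw [hre]
    _ ≤ ‖Complex.exp ((t:ℂ)*Complex.I)
          - ∑ m ∈ Finset.range n, ((t:ℂ)*Complex.I)^m / m.factorial‖ :=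
        Complex.abs_re_le_norm _
    _ ≤ ‖(t:ℂ)*Complex.I‖ ^ n * ((n.succ : ℝ) * ((n.factorial : ℝ) * n)⁻¹) := hb
    _ ≤ |t|^n * 2 := by
        have : ‖(t:ℂ)*Complex.I‖ = |t| := by simp
        rw [this]
        have h0 : (0:ℝ) ≤ |t|^n := by positivity
        have hc := factor_le_two n hn
        nlinarith
    _ = 2 * |t|^n := by ring

lemma sin_taylor (n : ℕ) (hn : 1 ≤ n) (t : ℝ) (ht : |t| ≤ 1) :
    |Real.sin t - ∑ m ∈ Finset.range n, (t^m / m.factorial) * (Complex.I^m).im|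
      ≤ 2 * |t|^n := by
  have hb := Complex.exp_bound (x := (t:ℂ) * Complex.I) (by simpa using ht) (by omega : 0 < n)
  have hre : (Complex.exp ((t:ℂ)*Complex.I)
      - ∑ m ∈ Finset.range n, ((t:ℂ)*Complex.I)^m / m.factorial).im
      = Real.sin t - ∑ m ∈ Finset.range n, (t^m / m.factorial) * (Complex.I^m).im := by
    rw [Complex.sub_im, Complex.exp_ofReal_mul_I_im, Complex.im_sum]
    congr 1
    refine Finset.sum_congr rfl fun m _ => ?_
    have : ((t:ℂ)*Complex.I)^m / m.factorial
        = ((t^m / m.factorial : ℝ) : ℂ) * Complex.I^m := by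
      push_cast; rw [mul_pow]; ring
    rw [this, Complex.im_ofReal_mul]
  calc |Real.sin t - ∑ m ∈ Finset.range n, (t^m / m.factorial) * (Complex.I^m).im|
      = |(Complex.exp ((t:ℂ)*Complex.I)
          - ∑ m ∈ Finset.range n, ((t:ℂ)*Complex.I)^m / m.factorial).im| := by rw [hre]
    _ ≤ ‖Complex.exp ((t:ℂ)*Complex.I)
          - ∑ m ∈ Finset.range n, ((t:ℂ)*Complex.I)^m / m.factorial‖ :=
        Complex.abs_im_le_norm _
    _ ≤ ‖(t:ℂ)*Complex.I‖ ^ n * ((n.succ : ℝ) * ((n.factorial : ℝ) * n)⁻¹) := hb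
    _ ≤ |t|^n * 2 := by
        have : ‖(t:ℂ)*Complex.I‖ = |t| := by simp
        rw [this]
        have h0 : (0:ℝ) ≤ |t|^n := by positivity
        have hc := factor_le_two n hn
        nlinarith
    _ = 2 * |t|^n := by ring

lemma besselJ_abs_le_one (n : ℕ) (x : ℝ) : |besselJ n x| ≤ 1 := by
  unfold besselJ
  rw [abs_mul]
  have h1 : ‖∫ θ in (0:ℝ)..π, Real.cos (n * θ - x * Real.sin θ)‖ ≤ 1 * |π - 0| :=
    intervalIntegral.norm_integral_le_of_norm_le_const fun θ _ => by
      simpa using Real.abs_cos_le_one _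
  rw [Real.norm_eq_abs] at h1
  have hπ : (0:ℝ) < π := Real.pi_pos
  calc |1/π| * |∫ θ in (0:ℝ)..π, Real.cos (n * θ - x * Real.sin θ)|
      ≤ |1/π| * (1 * |π - 0|) := mul_le_mul_of_nonneg_left h1 (abs_nonneg _)
    _ = 1 := by
        rw [sub_zero, abs_of_pos hπ, abs_of_pos (show (0:ℝ) < 1/π by positivity)]
        field_simp

lemma poly_cos_zero (n : ℕ) (x : ℝ) :
    (∫ θ in (0:ℝ)..π, Real.cos (n*θ) *
      (∑ m ∈ Finset.range n, ((x * Real.sin θ)^m / m.factorial) * (Complex.I^m).re)) = 0 := by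
  have hpt : ∀ θ : ℝ, Real.cos (n*θ) *
      (∑ m ∈ Finset.range n, ((x * Real.sin θ)^m / m.factorial) * (Complex.I^m).re)
      = ∑ m ∈ Finset.range n,
          (x^m / m.factorial * (Complex.I^m).re) * (Real.cos (n*θ) * Real.sin θ^m) := by
    intro θ
    rw [Finset.mul_sum]
    refine Finset.sum_congr rfl fun m _ => ?_
    rw [mul_pow]; ring
  rw [intervalIntegral.integral_congr fun θ _ => hpt θ]
  rw [intervalIntegral.integral_finset_sum
    (fun m _ => ((by fun_prop : Continuous fun θ : ℝ =>
      (x^m / m.factorial * (Complex.I^m).re) * (Real.cos (n*θ) * Real.sin θ^m)).intervalIntegrable _ _))]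
  refine Finset.sum_eq_zero fun m hm => ?_
  rw [intervalIntegral.integral_const_mul]
  rcases Nat.even_or_odd m with he | ho
  · rw [(trig_vanish m n (Finset.mem_range.mp hm)).1 he, mul_zero]
  · rw [I_pow_re_odd ho, mul_zero, zero_mul]

lemma poly_sin_zero (n : ℕ) (x : ℝ) :
    (∫ θ in (0:ℝ)..π, Real.sin (n*θ) *
      (∑ m ∈ Finset.range n, ((x * Real.sin θ)^m / m.factorial) * (Complex.I^m).im)) = 0 := by
  have hpt : ∀ θ : ℝ, Real.sin (n*θ) *
      (∑ m ∈ Finset.range n, ((x * Real.sin θ)^m / m.factorial) * (Complex.I^m).im)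
      = ∑ m ∈ Finset.range n,
          (x^m / m.factorial * (Complex.I^m).im) * (Real.sin (n*θ) * Real.sin θ^m) := by
    intro θ
    rw [Finset.mul_sum]
    refine Finset.sum_congr rfl fun m _ => ?_
    rw [mul_pow]; ring
  rw [intervalIntegral.integral_congr fun θ _ => hpt θ]
  rw [intervalIntegral.integral_finset_sum
    (fun m _ => ((by fun_prop : Continuous fun θ : ℝ =>
      (x^m / m.factorial * (Complex.I^m).im) * (Real.sin (n*θ) * Real.sin θ^m)).intervalIntegrable _ _))]
  refine Finset.sum_eq_zero fun m hm => ?_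
  rw [intervalIntegral.integral_const_mul]
  rcases Nat.even_or_odd m with he | ho
  · rw [I_pow_im_even he, mul_zero, zero_mul]
  · rw [(trig_vanish m n (Finset.mem_range.mp hm)).2 ho, mul_zero]

lemma besselJ_abs_le_pow (n : ℕ) (hn : 1 ≤ n) (x : ℝ) (hx0 : 0 ≤ x) :
    |besselJ n x| ≤ 4 * x ^ n := by
  rcases le_or_gt 1 x with hx1 | hx1
  · have h2 : (1:ℝ) ≤ x ^ n := one_le_pow₀ hx1
    have := besselJ_abs_le_one n x
    linarith
  · have hx1' : x ≤ 1 := hx1.le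
    have hPcC : Continuous fun θ : ℝ =>
        ∑ m ∈ Finset.range n, ((x * Real.sin θ)^m / m.factorial) * (Complex.I^m).re :=
      continuous_finset_sum _ fun m _ => by fun_prop
    have hPsC : Continuous fun θ : ℝ =>
        ∑ m ∈ Finset.range n, ((x * Real.sin θ)^m / m.factorial) * (Complex.I^m).im :=
      continuous_finset_sum _ fun m _ => by fun_prop
    have hC1 : Continuous fun θ : ℝ => Real.cos (n*θ) *
        (∑ m ∈ Finset.range n, ((x * Real.sin θ)^m / m.factorial) * (Complex.I^m).re)
        + Real.sin (n*θ) *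
        (∑ m ∈ Finset.range n, ((x * Real.sin θ)^m / m.factorial) * (Complex.I^m).im) :=
      (((by fun_prop : Continuous fun θ : ℝ => Real.cos (n*θ)).mul hPcC).add
        (((by fun_prop : Continuous fun θ : ℝ => Real.sin (n*θ)).mul hPsC)))
    have hC2 : Continuous fun θ : ℝ => Real.cos (n*θ) * (Real.cos (x * Real.sin θ)
          - ∑ m ∈ Finset.range n, ((x * Real.sin θ)^m / m.factorial) * (Complex.I^m).re)
        + Real.sin (n*θ) * (Real.sin (x * Real.sin θ)
          - ∑ m ∈ Finset.range n, ((x * Real.sin θ)^m / m.factorial) * (Complex.I^m).im) :=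
      (((by fun_prop : Continuous fun θ : ℝ => Real.cos (n*θ)).mul
          ((by fun_prop : Continuous fun θ : ℝ => Real.cos (x * Real.sin θ)).sub hPcC)).add
        ((by fun_prop : Continuous fun θ : ℝ => Real.sin (n*θ)).mul
          ((by fun_prop : Continuous fun θ : ℝ => Real.sin (x * Real.sin θ)).sub hPsC)))
    have hdecomp : ∀ θ : ℝ, Real.cos (n * θ - x * Real.sin θ)
        = (Real.cos (n*θ) *
            (∑ m ∈ Finset.range n, ((x * Real.sin θ)^m / m.factorial) * (Complex.I^m).re)
          + Real.sin (n*θ) *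
            (∑ m ∈ Finset.range n, ((x * Real.sin θ)^m / m.factorial) * (Complex.I^m).im))
        + (Real.cos (n*θ) * (Real.cos (x * Real.sin θ)
            - ∑ m ∈ Finset.range n, ((x * Real.sin θ)^m / m.factorial) * (Complex.I^m).re)
          + Real.sin (n*θ) * (Real.sin (x * Real.sin θ)
            - ∑ m ∈ Finset.range n, ((x * Real.sin θ)^m / m.factorial) * (Complex.I^m).im)) := by
      intro θ; rw [Real.cos_sub]; ring
    have hsplit : (∫ θ in (0:ℝ)..π, Real.cos (n * θ - x * Real.sin θ))
        = (∫ θ in (0:ℝ)..π, (Real.cos (n*θ) *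
            (∑ m ∈ Finset.range n, ((x * Real.sin θ)^m / m.factorial) * (Complex.I^m).re)
          + Real.sin (n*θ) *
            (∑ m ∈ Finset.range n, ((x * Real.sin θ)^m / m.factorial) * (Complex.I^m).im)))
        + (∫ θ in (0:ℝ)..π, (Real.cos (n*θ) * (Real.cos (x * Real.sin θ)
            - ∑ m ∈ Finset.range n, ((x * Real.sin θ)^m / m.factorial) * (Complex.I^m).re)
          + Real.sin (n*θ) * (Real.sin (x * Real.sin θ)
            - ∑ m ∈ Finset.range n, ((x * Real.sin θ)^m / m.factorial) * (Complex.I^m).im))) := by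
      rw [← intervalIntegral.integral_add (hC1.intervalIntegrable _ _) (hC2.intervalIntegrable _ _)]
      exact intervalIntegral.integral_congr fun θ _ => hdecomp θ
    have hfirst : (∫ θ in (0:ℝ)..π, (Real.cos (n*θ) *
            (∑ m ∈ Finset.range n, ((x * Real.sin θ)^m / m.factorial) * (Complex.I^m).re)
          + Real.sin (n*θ) *
            (∑ m ∈ Finset.range n, ((x * Real.sin θ)^m / m.factorial) * (Complex.I^m).im))) = 0 := by
      rw [intervalIntegral.integral_add
        (f := fun θ => Real.cos (n*θ) *
          (∑ m ∈ Finset.range n, ((x * Real.sin θ)^m / m.factorial) * (Complex.I^m).re))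
        (g := fun θ => Real.sin (n*θ) *
          (∑ m ∈ Finset.range n, ((x * Real.sin θ)^m / m.factorial) * (Complex.I^m).im))
        (((by fun_prop : Continuous fun θ : ℝ => Real.cos (n*θ)).mul hPcC).intervalIntegrable _ _)
        (((by fun_prop : Continuous fun θ : ℝ => Real.sin (n*θ)).mul hPsC).intervalIntegrable _ _),
        poly_cos_zero n x, poly_sin_zero n x, add_zero]
    have hsecond : ‖∫ θ in (0:ℝ)..π, (Real.cos (n*θ) * (Real.cos (x * Real.sin θ)
            - ∑ m ∈ Finset.range n, ((x * Real.sin θ)^m / m.factorial) * (Complex.I^m).re)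
          + Real.sin (n*θ) * (Real.sin (x * Real.sin θ)
            - ∑ m ∈ Finset.range n, ((x * Real.sin θ)^m / m.factorial) * (Complex.I^m).im))‖
        ≤ (4 * x^n) * |π - 0| := by
      refine intervalIntegral.norm_integral_le_of_norm_le_const fun θ _ => ?_
      have habs : |x * Real.sin θ| ≤ 1 := by
        rw [abs_mul, abs_of_nonneg hx0]
        calc x * |Real.sin θ| ≤ 1 * 1 :=
          mul_le_mul hx1' (Real.abs_sin_le_one θ) (abs_nonneg _) zero_le_one
        _ = 1 := one_mul 1
      have habs' : |x * Real.sin θ| ≤ x := by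
        rw [abs_mul, abs_of_nonneg hx0]
        calc x * |Real.sin θ| ≤ x * 1 :=
          mul_le_mul_of_nonneg_left (Real.abs_sin_le_one θ) hx0
        _ = x := mul_one x
      have hpow : |x * Real.sin θ|^n ≤ x^n := pow_le_pow_left₀ (abs_nonneg _) habs' n
      have h1 := cos_taylor n hn (x * Real.sin θ) habs
      have h2 := sin_taylor n hn (x * Real.sin θ) habs
      have hc1 : |Real.cos (n*θ)| ≤ 1 := Real.abs_cos_le_one _
      have hs1 : |Real.sin (n*θ)| ≤ 1 := Real.abs_sin_le_one _
      rw [Real.norm_eq_abs]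
      have htri := abs_add_le
        (Real.cos (n*θ) * (Real.cos (x * Real.sin θ)
          - ∑ m ∈ Finset.range n, ((x * Real.sin θ)^m / m.factorial) * (Complex.I^m).re))
        (Real.sin (n*θ) * (Real.sin (x * Real.sin θ)
          - ∑ m ∈ Finset.range n, ((x * Real.sin θ)^m / m.factorial) * (Complex.I^m).im))
      rw [abs_mul, abs_mul] at htri
      have e1 : |Real.cos (x * Real.sin θ)
          - ∑ m ∈ Finset.range n, ((x * Real.sin θ)^m / m.factorial) * (Complex.I^m).re| ≥ 0 :=
        abs_nonneg _
      have e2 : |Real.sin (x * Real.sin θ)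
          - ∑ m ∈ Finset.range n, ((x * Real.sin θ)^m / m.factorial) * (Complex.I^m).im| ≥ 0 :=
        abs_nonneg _
      nlinarith [abs_nonneg (Real.cos (n*θ)), abs_nonneg (Real.sin (n*θ))]
    unfold besselJ
    rw [abs_mul, hsplit, hfirst, zero_add]
    have hπ : (0:ℝ) < π := Real.pi_pos
    rw [Real.norm_eq_abs] at hsecond
    calc |1/π| * |∫ θ in (0:ℝ)..π, (Real.cos (n*θ) * (Real.cos (x * Real.sin θ)
            - ∑ m ∈ Finset.range n, ((x * Real.sin θ)^m / m.factorial) * (Complex.I^m).re)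
          + Real.sin (n*θ) * (Real.sin (x * Real.sin θ)
            - ∑ m ∈ Finset.range n, ((x * Real.sin θ)^m / m.factorial) * (Complex.I^m).im))|
        ≤ |1/π| * ((4 * x^n) * |π - 0|) := mul_le_mul_of_nonneg_left hsecond (abs_nonneg _)
      _ = 4 * x^n := by
          rw [sub_zero, abs_of_pos hπ, abs_of_pos (show (0:ℝ) < 1/π by positivity)]
          field_simp

open ArithmeticFunction in
lemma moebius_sq_le_one (b : ℕ) : ((moebius b : ℤ) : ℝ)^2 ≤ 1 := by
  by_cases hsf : Squarefree b
  · rw [ArithmeticFunction.moebius_apply_of_squarefree hsf]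
    push_cast
    rw [← pow_mul, mul_comm, pow_mul]
    norm_num
  · rw [ArithmeticFunction.moebius_eq_zero_of_not_squarefree hsf]
    norm_num

lemma integral_mono_trick {f g : ℝ → ℝ} {s : Set ℝ} (hs : MeasurableSet s)
    (hf0 : ∀ x ∈ s, 0 ≤ f x) (hfg : ∀ x ∈ s, f x ≤ g x)
    (hg : IntegrableOn g s volume) :
    ∫ x in s, f x ≤ ∫ x in s, g x := by
  by_cases hf : IntegrableOn f s volume
  · exact setIntegral_mono_on hf hg hs hfg
  · rw [integral_undef hf]
    exact setIntegral_nonneg hs fun x hx => le_trans (hf0 x hx) (hfg x hx)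

set_option maxHeartbeats 1000000 in
/-- For `k ≥ 2`, `s, R, N > 1` with `R ≥ N`, and `h` bounded with support in
`(-σ, σ)`, the series `∑_b (μ²(b)/φ(b)) ∫_0^∞ |J_{k-1}(y)| |h(2 log(by√N/4π)/log R)| dy`
converges, and the `b`-th summand is `O(R^{kσ/2}/(φ(b) bᵏ))`. -/
theorem bessel_sum_converges (k : ℕ) (hk : 2 ≤ k) (sig R N : ℝ)
    (hsig : 1 < sig) (hR : 1 < R) (hN : 1 < N) (hRN : N ≤ R) (h : ℝ → ℂ)
    (hbd : ∃ B : ℝ, ∀ t : ℝ, ‖h t‖ ≤ B)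
    (hsupp : Function.support h ⊆ Set.Ioo (-sig) sig) :
    Summable (fun b : ℕ => ((moebius b : ℝ) ^ 2 / (Nat.totient b : ℝ)) *
        ∫ y in Set.Ioi (0 : ℝ), |besselJ (k - 1) y| *
          ‖h (2 * Real.log (b * y * Real.sqrt N / (4 * π)) / Real.log R)‖) ∧
    ∃ C : ℝ, 0 < C ∧ ∀ b : ℕ, 1 ≤ b →
      ((moebius b : ℝ) ^ 2 / (Nat.totient b : ℝ)) *
          (∫ y in Set.Ioi (0 : ℝ), |besselJ (k - 1) y| *
            ‖h (2 * Real.log (b * y * Real.sqrt N / (4 * π)) / Real.log R)‖) ≤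
        C * R ^ ((k : ℝ) * sig / 2) / ((Nat.totient b : ℝ) * (b : ℝ) ^ k) := by
  obtain ⟨B, hB⟩ := hbd
  have hB0 : 0 ≤ B := le_trans (norm_nonneg _) (hB 0)
  set n : ℕ := k - 1 with hn
  have hkn : n + 1 = k := by omega
  have hn1 : 1 ≤ n := by omega
  have hR0 : (0:ℝ) < R := by linarith
  have hlogR : 0 < Real.log R := Real.log_pos hR
  have hsN0 : 0 < Real.sqrt N := Real.sqrt_pos.mpr (by linarith)
  have hsN1 : 1 ≤ Real.sqrt N := Real.one_le_sqrt.mpr hN.le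
  have hπ : (0:ℝ) < π := Real.pi_pos
  set C : ℝ := (4*π)^k * (4*(B+1)) with hC
  have hC0 : 0 < C := by positivity
  -- nonnegativity of each integral
  have hint_nonneg : ∀ b : ℕ, 0 ≤ ∫ y in Set.Ioi (0:ℝ), |besselJ n y| *
      ‖h (2 * Real.log (b * y * Real.sqrt N / (4 * π)) / Real.log R)‖ :=
    fun b => setIntegral_nonneg measurableSet_Ioi fun y _ => by positivity
  have key : ∀ b : ℕ, 1 ≤ b →
      ((moebius b : ℝ) ^ 2 / (Nat.totient b : ℝ)) *
          (∫ y in Set.Ioi (0 : ℝ), |besselJ n y| *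
            ‖h (2 * Real.log (b * y * Real.sqrt N / (4 * π)) / Real.log R)‖) ≤
        C * R ^ ((k : ℝ) * sig / 2) / ((Nat.totient b : ℝ) * (b : ℝ) ^ k) := by
    intro b hb
    have hb0 : (0:ℝ) < b := by exact_mod_cast hb
    set T : ℝ := 4 * π * R ^ (sig/2) / (b * Real.sqrt N) with hT
    have hrp : (0:ℝ) < R ^ (sig/2) := Real.rpow_pos_of_pos hR0 _
    have hT0 : 0 < T := by positivity
    -- vanishing of h beyond T
    have hvan : ∀ y : ℝ, T < y →
        h (2 * Real.log (b * y * Real.sqrt N / (4 * π)) / Real.log R) = 0 := by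
      intro y hy
      by_contra hne
      have hmem := hsupp (Function.mem_support.mpr hne)
      have hlt := hmem.2
      have harg : R ^ (sig/2) ≤ b * y * Real.sqrt N / (4 * π) := by
        rw [le_div_iff₀ (by positivity)]
        have : T * (b * Real.sqrt N) = 4 * π * R ^ (sig/2) := by
          rw [hT]; exact div_mul_cancel₀ _ (by positivity)
        nlinarith [mul_lt_mul_of_pos_right hy (by positivity : (0:ℝ) < b * Real.sqrt N)]
      have hlog : sig / 2 * Real.log R ≤ Real.log (b * y * Real.sqrt N / (4 * π)) := by
        rw [← Real.log_rpow hR0]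
        exact Real.log_le_log hrp harg
      have : sig ≤ 2 * Real.log (b * y * Real.sqrt N / (4 * π)) / Real.log R := by
        rw [le_div_iff₀ hlogR]
        nlinarith
      linarith
    -- reduce integral to Ioc 0 T
    have hred : (∫ y in Set.Ioi (0:ℝ), |besselJ n y| *
          ‖h (2 * Real.log (b * y * Real.sqrt N / (4 * π)) / Real.log R)‖)
        = ∫ y in Set.Ioc (0:ℝ) T, |besselJ n y| *
          ‖h (2 * Real.log (b * y * Real.sqrt N / (4 * π)) / Real.log R)‖ := by
      rw [setIntegral_congr_fun measurableSet_Ioi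
        (show Set.EqOn _ ((Set.Ioc (0:ℝ) T).indicator fun y => |besselJ n y| *
          ‖h (2 * Real.log (b * y * Real.sqrt N / (4 * π)) / Real.log R)‖) (Set.Ioi 0) from ?_),
        setIntegral_indicator measurableSet_Ioc,
        Set.inter_eq_self_of_subset_right Set.Ioc_subset_Ioi_self]
      intro y hy
      by_cases hyT : y ≤ T
      · exact (Set.indicator_of_mem (show y ∈ Set.Ioc (0:ℝ) T from ⟨hy, hyT⟩)
          (fun y => |besselJ n y| *
            ‖h (2 * Real.log (b * y * Real.sqrt N / (4 * π)) / Real.log R)‖)).symm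
      · have hz := hvan y (lt_of_not_ge hyT)
        simp [Set.indicator_of_notMem (fun hc : y ∈ Set.Ioc 0 T => hyT hc.2), hz]
    -- bound the integral on Ioc 0 T
    have hbound : (∫ y in Set.Ioc (0:ℝ) T, |besselJ n y| *
          ‖h (2 * Real.log (b * y * Real.sqrt N / (4 * π)) / Real.log R)‖)
        ≤ ∫ y in Set.Ioc (0:ℝ) T, 4 * y ^ n * B := by
      refine integral_mono_trick measurableSet_Ioc
        (fun y _ => mul_nonneg (abs_nonneg _) (norm_nonneg _))
        (fun y hy => ?_) ((by fun_prop : Continuous fun y : ℝ => 4 * y ^ n * B).integrableOn_Ioc)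
      have hy0 : (0:ℝ) ≤ y := hy.1.le
      exact mul_le_mul (besselJ_abs_le_pow n hn1 y hy0) (hB _) (norm_nonneg _)
        (by positivity)
    have hval : (∫ y in Set.Ioc (0:ℝ) T, 4 * y ^ n * B) ≤ 4 * B * T ^ k := by
      rw [← hkn, ← intervalIntegral.integral_of_le hT0.le]
      have heval : (∫ y in (0:ℝ)..T, 4 * y ^ n * B) = 4 * B * (T ^ (n+1) / ((n:ℝ)+1)) := by
        have : (∫ y in (0:ℝ)..T, 4 * y ^ n * B) = (4*B) * ∫ y in (0:ℝ)..T, y ^ n := by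
          rw [← intervalIntegral.integral_const_mul]
          exact intervalIntegral.integral_congr fun y _ => by ring
        rw [this, integral_pow]
        push_cast
        ring
      rw [heval]
      have hTp : 0 ≤ T ^ (n+1) := by positivity
      have hnp : (1:ℝ) ≤ (n:ℝ) + 1 := by exact_mod_cast Nat.le_add_left 1 n
      exact mul_le_mul_of_nonneg_left (div_le_self hTp hnp) (by positivity)
    -- estimate T^k
    have hTk : T ^ k ≤ (4*π)^k * R ^ ((k:ℝ) * sig / 2) / (b:ℝ) ^ k := by
      have hrpk : (R ^ (sig/2)) ^ k = R ^ ((k:ℝ) * sig / 2) := by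
        rw [← Real.rpow_natCast (R ^ (sig/2)) k, ← Real.rpow_mul hR0.le]
        congr 1
        ring
      have hTeq : T ^ k = (4*π)^k * R ^ ((k:ℝ) * sig / 2) / ((b:ℝ) * Real.sqrt N) ^ k := by
        rw [hT, div_pow, mul_pow, hrpk]
      rw [hTeq]
      apply div_le_div_of_nonneg_left (by positivity) (by positivity)
      have hble : (b:ℝ) ≤ (b:ℝ) * Real.sqrt N := by nlinarith
      exact pow_le_pow_left₀ hb0.le hble k
    -- combine
    have hφ1 : (1:ℝ) ≤ (Nat.totient b : ℝ) := by
      exact_mod_cast Nat.totient_pos.mpr (by omega)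
    have hφ0 : (0:ℝ) < (Nat.totient b : ℝ) := by linarith
    have hμ : ((moebius b : ℤ) : ℝ)^2 ≤ 1 := moebius_sq_le_one b
    have hintle : (∫ y in Set.Ioi (0:ℝ), |besselJ n y| *
          ‖h (2 * Real.log (b * y * Real.sqrt N / (4 * π)) / Real.log R)‖)
        ≤ C * R ^ ((k:ℝ) * sig / 2) / (b:ℝ) ^ k := by
      rw [hred]
      refine le_trans hbound (le_trans hval ?_)
      have hY0 : (0:ℝ) ≤ (4*π)^k * R ^ ((k:ℝ) * sig / 2) / (b:ℝ) ^ k := by positivity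
      have h4B : 4 * B * T ^ k ≤ 4 * (B+1) * ((4*π)^k * R ^ ((k:ℝ) * sig / 2) / (b:ℝ) ^ k) := by
        calc 4 * B * T ^ k ≤ 4 * B * ((4*π)^k * R ^ ((k:ℝ) * sig / 2) / (b:ℝ) ^ k) :=
              mul_le_mul_of_nonneg_left hTk (by positivity)
          _ ≤ 4 * (B+1) * ((4*π)^k * R ^ ((k:ℝ) * sig / 2) / (b:ℝ) ^ k) :=
              mul_le_mul_of_nonneg_right (by linarith) hY0
      calc 4 * B * T ^ k ≤ 4 * (B+1) * ((4*π)^k * R ^ ((k:ℝ) * sig / 2) / (b:ℝ) ^ k) := h4B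
        _ = C * R ^ ((k:ℝ) * sig / 2) / (b:ℝ) ^ k := by rw [hC]; ring
    calc ((moebius b : ℝ) ^ 2 / (Nat.totient b : ℝ)) *
          (∫ y in Set.Ioi (0 : ℝ), |besselJ n y| *
            ‖h (2 * Real.log (b * y * Real.sqrt N / (4 * π)) / Real.log R)‖)
        ≤ (1 / (Nat.totient b : ℝ)) * (C * R ^ ((k:ℝ) * sig / 2) / (b:ℝ) ^ k) := by
          apply mul_le_mul _ hintle (hint_nonneg b) (by positivity)
          exact (div_le_div_iff_of_pos_right hφ0).mpr hμ
      _ = C * R ^ ((k : ℝ) * sig / 2) / ((Nat.totient b : ℝ) * (b : ℝ) ^ k) := by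
          field_simp
  refine ⟨?_, C, hC0, key⟩
  apply Summable.of_nonneg_of_le
    (f := fun b : ℕ => (C * R ^ ((k:ℝ) * sig / 2)) * (1 / (b:ℝ) ^ k))
  · intro b
    apply mul_nonneg _ (hint_nonneg b)
    positivity
  · intro b
    rcases Nat.eq_zero_or_pos b with rfl | hb
    · simp
      positivity
    · refine le_trans (key b hb) ?_
      have hφ1 : (1:ℝ) ≤ (Nat.totient b : ℝ) := by
        exact_mod_cast Nat.totient_pos.mpr (by omega)
      have hb0 : (0:ℝ) < b := by exact_mod_cast hb
      rw [mul_one_div]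
      apply div_le_div_of_nonneg_left (by positivity) (by positivity)
      nlinarith [pow_pos hb0 k]
  · exact (Real.summable_one_div_nat_pow.mpr (by omega)).mul_left _
end
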